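/- Let $n \geq 2$, $1 \leq k \leq n/2$, and $\lambda_1, \ldots, \lambda_n$ be real numbers. Then $\sum_{(i_1,\ldots,i_{2k})} (\lambda_{i_1} + \lambda_{i_2})(\lambda_{i_3} + \lambda_{i_4}) \cdots (\lambda_{i_{2k-1}} + \lambda_{i_{2k}}) = \frac{2^k\,(n-k)!\,k!}{(n-2k)!} \, \sigma_k(\lambda_1,\ldots,\lambda_n)$, where the sum runs over all ordered $2k$-tuples of pairwise distinct indices in $\{1,\ldots,n\}$ and $\sigma_k$ is the $k$-th elementary symmetric polynomial. -/
import Mathlib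
open Finset Function




-- Lemma A: sum over embeddings = k! * esymm
lemma sum_emb_prod (k n : ℕ) (lam : Fin n → ℝ) :
    ∑ g : Fin k ↪ Fin n, ∏ j, lam (g j) =
      (Nat.factorial k : ℝ) *
        ∑ s ∈ Finset.powersetCard k (Finset.univ : Finset (Fin n)), ∏ i ∈ s, lam i := by
  have hmaps : ∀ g : Fin k ↪ Fin n, g ∈ (univ : Finset (Fin k ↪ Fin n)) →
      (univ.image g) ∈ powersetCard k (univ : Finset (Fin n)) := by
    intro g _
    rw [mem_powersetCard]
    exact ⟨subset_univ _, by rw [card_image_of_injective _ g.injective, card_univ,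
      Fintype.card_fin]⟩
  rw [← Finset.sum_fiberwise_of_maps_to hmaps]
  rw [Finset.mul_sum]
  refine Finset.sum_congr rfl fun s hs => ?_
  rw [mem_powersetCard] at hs
  have hcongr : ∀ g ∈ ((univ : Finset (Fin k ↪ Fin n)).filter fun h : Fin k ↪ Fin n => image (⇑h) univ = s),
      (∏ j, lam (g j)) = ∏ i ∈ s, lam i := by
    intro g hg
    rw [mem_filter] at hg
    rw [← hg.2, Finset.prod_image (fun x _ y _ h => g.injective h)]
  rw [Finset.sum_congr rfl hcongr, Finset.sum_const, nsmul_eq_mul]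
  congr 1
  -- count = k!
  have : ((univ : Finset (Fin k ↪ Fin n)).filter fun h : Fin k ↪ Fin n => image (⇑h) univ = s).card
      = Fintype.card {g : Fin k ↪ Fin n // univ.image (⇑g) = s} := by
    rw [Fintype.card_subtype]
  rw [this]
  have e : {g : Fin k ↪ Fin n // univ.image (⇑g) = s} ≃ (Fin k ↪ ↥(↑s : Set (Fin n))) := by
    refine ⟨fun g => Function.Embedding.codRestrict _ g.1
      (fun a => by simp [← g.2]), fun h => ⟨h.trans (Function.Embedding.subtype _), ?_⟩,
      fun g => by ext x; rfl, fun h => by ext x; rfl⟩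
    · apply Finset.eq_of_subset_of_card_le
      · intro x hx
        rw [Finset.mem_image] at hx
        obtain ⟨a, _, rfl⟩ := hx
        exact (h a).2
      · rw [card_image_of_injective _ ((h.trans (Function.Embedding.subtype _)).injective),
          card_univ, Fintype.card_fin, hs.2]
  rw [Fintype.card_congr e, Fintype.card_embedding_eq]
  simp [hs.2, Nat.descFactorial_self]

-- Lemma B: sum over sum-type embeddings
lemma sum_sum_emb (k n : ℕ) (lam : Fin n → ℝ) :
    ∑ F : (Fin k ⊕ Fin k) ↪ Fin n, ∏ j, lam (F (Sum.inl j)) =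
      ((n - k).descFactorial k : ℝ) * ∑ g : Fin k ↪ Fin n, ∏ j, lam (g j) := by
  rw [Fintype.sum_equiv (Equiv.sumEmbeddingEquivSigmaEmbeddingRestricted)
    (fun F => ∏ j, lam (F (Sum.inl j)))
    (fun p : (Σ g : Fin k ↪ Fin n, Fin k ↪ ↥(Set.range g)ᶜ) => ∏ j, lam (p.1 j))
    (fun F => rfl)]
  rw [← Finset.univ_sigma_univ, Finset.sum_sigma]
  rw [Finset.mul_sum]
  refine Finset.sum_congr rfl fun g _ => ?_
  dsimp only
  rw [Finset.sum_const, nsmul_eq_mul]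
  congr 2
  rw [card_univ, Fintype.card_embedding_eq, Fintype.card_compl_set, Fintype.card_range]
  simp




lemma sum_inj_comp (k n : ℕ) (lam : Fin n → ℝ) (e : Fin k → Fin (2 * k))
    (he : Function.Injective e) :
    ∑ f ∈ Finset.univ.filter (fun f : Fin (2 * k) → Fin n => Function.Injective f),
      ∏ j, lam (f (e j)) =
      ((n - k).descFactorial k : ℝ) * ∑ g : Fin k ↪ Fin n, ∏ j, lam (g j) := by
  classical
  have hcard : Fintype.card ↥(Set.range e)ᶜ = k := by
    rw [Fintype.card_compl_set, Set.card_range_of_injective he]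
    simp; omega
  let ec : Fin k ≃ ↥(Set.range e)ᶜ := (Fintype.equivFinOfCardEq hcard).symm
  have hinj : Function.Injective (Sum.elim e (fun j => (ec j : Fin (2 * k)))) := by
    rintro (a | a) (b | b) h
    · exact congrArg Sum.inl (he h)
    · exact absurd ⟨a, h⟩ (ec b).2
    · exact absurd ⟨b, h.symm⟩ (ec a).2
    · exact congrArg Sum.inr (ec.injective (Subtype.ext h))
  have hcards : Fintype.card (Fin k ⊕ Fin k) = Fintype.card (Fin (2 * k)) := by
    simp; omega
  let Φ : (Fin k ⊕ Fin k) ≃ Fin (2 * k) :=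
    Equiv.ofBijective _ ((Fintype.bijective_iff_injective_and_card _).mpr ⟨hinj, hcards⟩)
  have hΦ : ∀ j, Φ (Sum.inl j) = e j := fun j => rfl
  rw [← sum_sum_emb]
  refine Finset.sum_bij'
    (i := fun f hf => (⟨fun x => f (Φ x),
      ((Finset.mem_filter.mp hf).2).comp Φ.injective⟩ : (Fin k ⊕ Fin k) ↪ Fin n))
    (j := fun F _ => fun x => F (Φ.symm x)) ?_ ?_ ?_ ?_ ?_
  · intro f hf; exact Finset.mem_univ _
  · intro F _
    exact Finset.mem_filter.mpr ⟨Finset.mem_univ _, F.injective.comp Φ.symm.injective⟩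
  · intro f hf; funext x; simp
  · intro F hF; ext x; simp
  · intro f hf
    exact Finset.prod_congr rfl fun j _ => rfl

theorem sum_distinct_tuples_pair_sums (n k : ℕ) (hn : 2 ≤ n) (hk : 1 ≤ k)
    (hkn : 2 * k ≤ n) (lam : Fin n → ℝ) :
    ∑ f ∈ Finset.univ.filter (fun f : Fin (2 * k) → Fin n => Function.Injective f),
      ∏ j : Fin k,
        (lam (f ⟨2 * j, by have := j.isLt; omega⟩) +
         lam (f ⟨2 * j + 1, by have := j.isLt; omega⟩)) =
    ((2 ^ k * (n - k).factorial * k.factorial : ℕ) : ℝ) / ((n - 2 * k).factorial : ℝ) *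
      ∑ s ∈ Finset.powersetCard k (Finset.univ : Finset (Fin n)), ∏ i ∈ s, lam i := by
  classical
  set S := ∑ s ∈ Finset.powersetCard k (Finset.univ : Finset (Fin n)), ∏ i ∈ s, lam i with hS
  set E : Finset (Fin k) → Fin k → Fin (2 * k) :=
    fun t j => if j ∈ t then ⟨2 * j, by have := j.isLt; omega⟩
      else ⟨2 * j + 1, by have := j.isLt; omega⟩ with hE
  have hEinj : ∀ t, Function.Injective (E t) := by
    intro t a b hab
    have h := congrArg Fin.val hab
    simp only [hE] at h
    apply Fin.ext
    by_cases ha : a ∈ t <;> by_cases hb : b ∈ t <;> simp [ha, hb] at h <;> omega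
  have step1 : ∀ f : Fin (2 * k) → Fin n, ∀ t : Finset (Fin k),
      (∏ j ∈ t, lam (f ⟨2 * j, by have := j.isLt; omega⟩)) *
        ∏ j ∈ tᶜ, lam (f ⟨2 * j + 1, by have := j.isLt; omega⟩) =
      ∏ j, lam (f (E t j)) := by
    intro f t
    rw [← Finset.prod_mul_prod_compl t (fun j => lam (f (E t j)))]
    congr 1
    · exact Finset.prod_congr rfl fun j hj => by rw [hE]; simp only [if_pos hj]
    · exact Finset.prod_congr rfl fun j hj => by
        rw [hE]; simp only [if_neg (Finset.mem_compl.mp hj)]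
  calc
    ∑ f ∈ Finset.univ.filter (fun f : Fin (2 * k) → Fin n => Function.Injective f),
      ∏ j : Fin k,
        (lam (f ⟨2 * j, by have := j.isLt; omega⟩) +
         lam (f ⟨2 * j + 1, by have := j.isLt; omega⟩))
      = ∑ f ∈ Finset.univ.filter (fun f : Fin (2 * k) → Fin n => Function.Injective f),
          ∑ t : Finset (Fin k), ∏ j, lam (f (E t j)) := by
        refine Finset.sum_congr rfl fun f _ => ?_
        rw [Fintype.prod_add]
        exact Finset.sum_congr rfl fun t _ => step1 f t
    _ = ∑ t : Finset (Fin k),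
          ∑ f ∈ Finset.univ.filter (fun f : Fin (2 * k) → Fin n => Function.Injective f),
            ∏ j, lam (f (E t j)) := Finset.sum_comm
    _ = ∑ _t : Finset (Fin k),
          ((n - k).descFactorial k : ℝ) * ∑ g : Fin k ↪ Fin n, ∏ j, lam (g j) :=
        Finset.sum_congr rfl fun t _ => sum_inj_comp k n lam (E t) (hEinj t)
    _ = (2 ^ k : ℝ) * (((n - k).descFactorial k : ℝ) * ((k.factorial : ℝ) * S)) := by
        rw [sum_emb_prod, Finset.sum_const, Finset.card_univ, Fintype.card_finset,
          Fintype.card_fin, nsmul_eq_mul]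
        push_cast
        ring
    _ = ((2 ^ k * (n - k).factorial * k.factorial : ℕ) : ℝ) / ((n - 2 * k).factorial : ℝ) * S := by
        have hk2 : k ≤ n - k := by omega
        have key : (n - 2 * k).factorial * (n - k).descFactorial k = (n - k).factorial := by
          have h := Nat.factorial_mul_descFactorial hk2
          rwa [show n - k - k = n - 2 * k by omega] at h
        have keyR : ((n - 2 * k).factorial : ℝ) * ((n - k).descFactorial k : ℝ)
            = ((n - k).factorial : ℝ) := by exact_mod_cast key
        have hne : ((n - 2 * k).factorial : ℝ) ≠ 0 := by positivity
        rw [div_mul_eq_mul_div, eq_div_iff hne]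
        push_cast
        linear_combination ((2 : ℝ) ^ k * (k.factorial : ℝ) * S) * keyR
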